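/- If X is a compactum and κ is an infinite cardinal such that X has a free sequence of length κ, then there is a point p ∈ X and an escape sequence at p of length κ. -/

import Mathlib

universe u v w

/-- `U` is an escape sequence at `p`: a decreasing (w.r.t. the index order) sequence
of neighborhoods of `p` whose intersection is not a neighborhood of `p`. -/
def IsEscapeSeq {X : Type w} [TopologicalSpace X] (p : X) {ι : Type u} [Preorder ι]
    (U : ι → Set X) : Prop :=
  (∀ i, U i ∈ nhds p) ∧ (∀ i j : ι, i ≤ j → U j ⊆ U i) ∧ (⋂ i, U i) ∉ nhds p

/-- A free sequence: for every index `i`, the closure of the earlier points is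
disjoint from the closure of the later (including current) points. -/
def IsFreeSeq {X : Type w} [TopologicalSpace X] {ι : Type u} [LinearOrder ι]
    (f : ι → X) : Prop :=
  ∀ i : ι, Disjoint (closure (f '' {j | j < i})) (closure (f '' {j | i ≤ j}))

/-- If `X` is a compactum and `κ` is an infinite cardinal such that `X`
has a free sequence of length `κ`, then some point of `X` has an escape sequence of
length `κ`. -/
theorem escape_seq_of_free_seq_card {X : Type u} [TopologicalSpace X] [CompactSpace X]
    [T2Space X] (κ : Cardinal.{v}) (hκ : Cardinal.aleph0 ≤ κ)
    (f : κ.ord.ToType → X) (hf : IsFreeSeq f) :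
    ∃ (q : X) (U : κ.ord.ToType → Set X), IsEscapeSeq q U := by
  haveI : Nonempty κ.ord.ToType := Ordinal.toType_nonempty_iff_ne_zero.2 (by
    rw [Ne, Cardinal.ord_eq_zero]
    rintro rfl
    exact (Cardinal.aleph0_pos.not_ge hκ))
  haveI : NoMaxOrder κ.ord.ToType := Cardinal.noMaxOrder hκ
  -- tails
  set F : κ.ord.ToType → Set X := fun i => closure (f '' {j | i ≤ j}) with hF
  have hFne : ∀ i, (F i).Nonempty := fun i =>
    ((Set.image_nonempty.2 ⟨i, show i ∈ {j | i ≤ j} from le_refl i⟩).closure)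
  have hFmono : ∀ i j : κ.ord.ToType, i ≤ j → F j ⊆ F i := fun i j hij =>
    closure_mono (Set.image_mono fun k hk => le_trans hij hk)
  have hdir : Directed (· ⊇ ·) F := fun i j => by
    rcases le_total i j with h | h
    · exact ⟨j, hFmono i j h, le_refl _⟩
    · exact ⟨i, le_refl _, hFmono j i h⟩
  obtain ⟨q, hq⟩ := IsCompact.nonempty_iInter_of_directed_nonempty_isCompact_isClosed
    F hdir hFne (fun i => (isClosed_closure).isCompact) (fun i => isClosed_closure)
  have hqF : ∀ i, q ∈ F i := by simpa using hq
  refine ⟨q, fun i => (closure (f '' {j | j < i}))ᶜ, ?_, ?_, ?_⟩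
  · intro i
    refine IsOpen.mem_nhds isClosed_closure.isOpen_compl ?_
    exact fun hmem => Set.disjoint_left.1 (hf i) hmem (hqF i)
  · intro i j hij
    exact Set.compl_subset_compl.2 (closure_mono (Set.image_mono fun k hk =>
      lt_of_lt_of_le hk hij))
  · intro hmem
    obtain ⟨V, hVsub, hVopen, hqV⟩ := mem_nhds_iff.1 hmem
    -- q is in the closure of the range of f
    obtain ⟨i0⟩ := ‹Nonempty κ.ord.ToType›
    have hqcl : q ∈ closure (f '' {j | i0 ≤ j}) := hqF i0
    obtain ⟨x, hx, hxV⟩ := mem_closure_iff.1 hqcl V hVopen hqV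
    obtain ⟨j, hj, rfl⟩ := hxV
    -- but f j ∈ closure of initial segment at a successor of j
    obtain ⟨j', hj'⟩ := exists_gt j
    have : f j ∈ closure (f '' {k | k < j'}) :=
      subset_closure ⟨j, hj', rfl⟩
    exact Set.mem_iInter.1 (hVsub hx) j' this
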